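/- For λ > 0, the quantile function of the skew normal SN(λ) satisfies F⁻¹(u) ~ -√( -(2/(1+λ²)) log(-2πλ u log(2πλ u)) ) as u → 0⁺. -/

import Mathlib

open Real MeasureTheory Filter Set Topology

noncomputable def stdNormalPdf (t : ℝ) : ℝ := (Real.sqrt (2 * π))⁻¹ * Real.exp (-t ^ 2 / 2)

noncomputable def stdNormalCdf (z : ℝ) : ℝ := ∫ t in Set.Iic z, stdNormalPdf t

noncomputable def skewNormalCdf (l z : ℝ) : ℝ :=
  ∫ t in Set.Iic z, 2 * stdNormalPdf t * stdNormalCdf (l * t)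

lemma pdf_pos (t : ℝ) : 0 < stdNormalPdf t := by
  unfold stdNormalPdf; positivity

lemma pdf_integrable : Integrable stdNormalPdf := by
  have h := integrable_exp_neg_mul_sq (b := 1/2) (by norm_num)
  have h2 := h.const_mul ((Real.sqrt (2 * π))⁻¹)
  refine h2.congr (Eventually.of_forall fun t => ?_)
  unfold stdNormalPdf; ring_nf

lemma pdf_anti {a b : ℝ} (hb : b ≤ 0) (hab : a ≤ b) : stdNormalPdf a ≤ stdNormalPdf b := by
  unfold stdNormalPdf
  have : Real.exp (-a ^ 2 / 2) ≤ Real.exp (-b ^ 2 / 2) := by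
    apply Real.exp_le_exp.mpr; nlinarith
  have h0 : (0:ℝ) ≤ (Real.sqrt (2 * π))⁻¹ := by positivity
  exact mul_le_mul_of_nonneg_left this h0

lemma integral_pdf : ∫ t, stdNormalPdf t = 1 := by
  unfold stdNormalPdf
  rw [MeasureTheory.integral_const_mul]
  have : (∫ t : ℝ, Real.exp (-t ^ 2 / 2)) = ∫ t : ℝ, Real.exp (-(1/2) * t ^ 2) := by
    congr 1; funext t; ring_nf
  rw [this, integral_gaussian]
  have hπ : (0:ℝ) < π := Real.pi_pos
  rw [show π / (1/2) = 2 * π by ring]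
  rw [inv_mul_cancel₀ (by positivity)]

lemma cdf_mono : Monotone stdNormalCdf := by
  intro a b hab
  apply setIntegral_mono_set pdf_integrable.integrableOn
    (Eventually.of_forall fun t => (pdf_pos t).le)
  exact HasSubset.Subset.eventuallyLE (Iic_subset_Iic.mpr hab)

lemma cdf_le_one (x : ℝ) : stdNormalCdf x ≤ 1 := by
  have h1 : stdNormalCdf x ≤ ∫ t, stdNormalPdf t :=
    setIntegral_le_integral pdf_integrable (Eventually.of_forall fun t => (pdf_pos t).le)
  rwa [integral_pdf] at h1

lemma cdf_nonneg (x : ℝ) : 0 ≤ stdNormalCdf x :=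
  setIntegral_nonneg measurableSet_Iic fun t _ => (pdf_pos t).le

lemma cdf_le (x : ℝ) (hx : x ≤ 0) : stdNormalCdf x ≤ Real.exp (-x ^ 2 / 2) := by
  have key : ∀ t ∈ Set.Iic x, stdNormalPdf t ≤ Real.exp (-x ^ 2 / 2) * stdNormalPdf (t - x) := by
    intro t ht
    simp only [Set.mem_Iic] at ht
    unfold stdNormalPdf
    rw [← mul_assoc, mul_comm (Real.exp (-x^2/2)), mul_assoc, ← Real.exp_add]
    have h0 : (0:ℝ) ≤ (Real.sqrt (2 * π))⁻¹ := by positivity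
    apply mul_le_mul_of_nonneg_left _ h0
    apply Real.exp_le_exp.mpr
    nlinarith
  have hint : Integrable (fun t => Real.exp (-x ^ 2 / 2) * stdNormalPdf (t - x)) :=
    (pdf_integrable.comp_sub_right x).const_mul _
  calc stdNormalCdf x ≤ ∫ t in Set.Iic x, Real.exp (-x ^ 2 / 2) * stdNormalPdf (t - x) :=
        setIntegral_mono_on pdf_integrable.integrableOn hint.integrableOn measurableSet_Iic key
    _ ≤ ∫ t, Real.exp (-x ^ 2 / 2) * stdNormalPdf (t - x) :=
        setIntegral_le_integral hint (Eventually.of_forall fun t => mul_nonneg (Real.exp_nonneg _) (pdf_pos _).le)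
    _ = Real.exp (-x ^ 2 / 2) := by
        rw [MeasureTheory.integral_const_mul, integral_sub_right_eq_self stdNormalPdf x,
          integral_pdf, mul_one]

lemma cdf_ge (x : ℝ) (hx : x ≤ 0) : stdNormalPdf (x - 1) ≤ stdNormalCdf x := by
  have h1 : stdNormalPdf (x-1) * (volume (Set.Ioc (x-1) x)).toReal
      ≤ ∫ t in Set.Ioc (x-1) x, stdNormalPdf t := by
    apply setIntegral_ge_of_const_le_real measurableSet_Ioc (by simp)
    · intro t ht
      exact pdf_anti (le_trans ht.2 hx) (le_of_lt ht.1)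
    · exact pdf_integrable.integrableOn
  rw [Real.volume_Ioc] at h1
  have : x - (x - 1) = 1 := by ring
  rw [this] at h1
  simp at h1
  refine le_trans h1 ?_
  apply setIntegral_mono_set pdf_integrable.integrableOn
    (Eventually.of_forall fun t => (pdf_pos t).le)
  exact HasSubset.Subset.eventuallyLE (fun t ht => ht.2)

lemma cdf_pos (x : ℝ) : 0 < stdNormalCdf x := by
  rcases le_or_gt x 0 with h | h
  · exact lt_of_lt_of_le (pdf_pos _) (cdf_ge x h)
  · exact lt_of_lt_of_le (lt_of_lt_of_le (pdf_pos _) (cdf_ge 0 le_rfl)) (cdf_mono h.le)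

section skew
variable {l : ℝ} (hl : 0 < l)

lemma pdf_continuous : Continuous stdNormalPdf := by
  unfold stdNormalPdf; fun_prop

lemma sg_meas : Measurable (fun t => 2 * stdNormalPdf t * stdNormalCdf (l * t)) := by
  apply Measurable.mul
  · exact (pdf_continuous.measurable).const_mul 2
  · exact cdf_mono.measurable.comp (measurable_const_mul l)

lemma sg_nonneg (t : ℝ) : 0 ≤ 2 * stdNormalPdf t * stdNormalCdf (l * t) :=
  mul_nonneg (mul_nonneg two_pos.le (pdf_pos t).le) (cdf_nonneg _)

lemma sg_integrable : Integrable (fun t => 2 * stdNormalPdf t * stdNormalCdf (l * t)) := by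
  apply Integrable.mono' (pdf_integrable.const_mul 2) (sg_meas).aestronglyMeasurable
  refine Eventually.of_forall fun t => ?_
  rw [Real.norm_eq_abs, abs_of_nonneg (sg_nonneg t)]
  have := cdf_le_one (l * t)
  nlinarith [pdf_pos t, cdf_nonneg (l*t)]

lemma skew_mono : Monotone (skewNormalCdf l) := by
  intro a b hab
  apply setIntegral_mono_set sg_integrable.integrableOn
    (Eventually.of_forall sg_nonneg)
  exact HasSubset.Subset.eventuallyLE (Iic_subset_Iic.mpr hab)

include hl in
lemma skew_upper (z : ℝ) (hz : z ≤ 0) :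
    skewNormalCdf l z ≤ 2 * Real.exp (-(1 + l^2) * z^2 / 2) := by
  have key : ∀ t ∈ Set.Iic z, 2 * stdNormalPdf t * stdNormalCdf (l * t)
      ≤ stdNormalCdf (l * z) * (2 * stdNormalPdf t) := by
    intro t ht
    simp only [Set.mem_Iic] at ht
    have h1 : stdNormalCdf (l * t) ≤ stdNormalCdf (l * z) :=
      cdf_mono (by nlinarith)
    nlinarith [pdf_pos t]
  calc skewNormalCdf l z ≤ ∫ t in Set.Iic z, stdNormalCdf (l * z) * (2 * stdNormalPdf t) :=
        setIntegral_mono_on sg_integrable.integrableOn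
          (((pdf_integrable.const_mul 2).const_mul _).integrableOn) measurableSet_Iic key
    _ = stdNormalCdf (l * z) * (2 * stdNormalCdf z) := by
        rw [MeasureTheory.integral_const_mul, MeasureTheory.integral_const_mul]
        rfl
    _ ≤ Real.exp (-(l*z) ^ 2 / 2) * (2 * Real.exp (-z ^ 2 / 2)) := by
        have h1 := cdf_le (l * z) (by nlinarith)
        have h2 := cdf_le z hz
        have := cdf_nonneg (l * z)
        have := Real.exp_nonneg (-(l*z)^2/2)
        nlinarith [cdf_pos z, Real.exp_pos (-z^2/2)]
    _ = 2 * Real.exp (-(1 + l^2) * z^2 / 2) := by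
        rw [mul_comm, mul_assoc, ← Real.exp_add]; ring_nf

include hl in
lemma skew_lower (z : ℝ) (hz : z ≤ 0) :
    2 * stdNormalPdf (z - 1) * stdNormalPdf (l * (z - 1) - 1) ≤ skewNormalCdf l z := by
  have key : ∀ t ∈ Set.Ioc (z-1) z,
      2 * stdNormalPdf (z-1) * stdNormalPdf (l * (z-1) - 1)
        ≤ 2 * stdNormalPdf t * stdNormalCdf (l * t) := by
    intro t ht
    have h1 : stdNormalPdf (z-1) ≤ stdNormalPdf t := pdf_anti (le_trans ht.2 hz) (le_of_lt ht.1)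
    have h2 : stdNormalPdf (l * (z-1) - 1) ≤ stdNormalCdf (l * t) := by
      refine le_trans (cdf_ge (l * (z-1)) (by nlinarith)) (cdf_mono (by nlinarith [ht.1.le]))
    nlinarith [pdf_pos (z-1), pdf_pos t, cdf_nonneg (l*t), pdf_pos (l*(z-1)-1)]
  have h1 : 2 * stdNormalPdf (z-1) * stdNormalPdf (l*(z-1)-1) * (volume (Set.Ioc (z-1) z)).toReal
      ≤ ∫ t in Set.Ioc (z-1) z, 2 * stdNormalPdf t * stdNormalCdf (l * t) :=
    setIntegral_ge_of_const_le_real measurableSet_Ioc (by simp) key sg_integrable.integrableOn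
  rw [Real.volume_Ioc, show z - (z - 1) = 1 by ring] at h1
  simp at h1
  refine le_trans h1 ?_
  apply setIntegral_mono_set sg_integrable.integrableOn (Eventually.of_forall sg_nonneg)
  exact HasSubset.Subset.eventuallyLE (fun t ht => ht.2)

include hl in
lemma skew_pos (z : ℝ) : 0 < skewNormalCdf l z := by
  rcases le_or_gt z 0 with h | h
  · refine lt_of_lt_of_le ?_ (skew_lower hl z h)
    have := pdf_pos (z-1); have := pdf_pos (l*(z-1)-1); nlinarith
  · refine lt_of_lt_of_le (lt_of_lt_of_le ?_ (skew_lower hl 0 le_rfl)) (skew_mono h.le)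
    have := pdf_pos (0-1:ℝ); have := pdf_pos (l*(0-1)-1); nlinarith

end skew

lemma log_pdf (x : ℝ) :
    Real.log (stdNormalPdf x) = Real.log ((Real.sqrt (2 * π))⁻¹) - x ^ 2 / 2 := by
  unfold stdNormalPdf
  rw [Real.log_mul (by positivity) (Real.exp_ne_zero _), Real.log_exp]
  ring

lemma tendsto_inv_atBot_zero' : Tendsto (fun z : ℝ => z⁻¹) atBot (𝓝 0) := by
  have h := (tendsto_inv_atTop_zero (𝕜 := ℝ)).comp tendsto_neg_atBot_atTop
  have h2 := h.neg
  rw [neg_zero] at h2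
  refine h2.congr fun z => by simp only [Function.comp_apply]; rw [inv_neg, neg_neg]

lemma skew_log_asymp {l : ℝ} (hl : 0 < l) :
    Tendsto (fun z => Real.log (skewNormalCdf l z) / z ^ 2) atBot
      (𝓝 (-(1 + l ^ 2) / 2)) := by
  set c : ℝ := (Real.sqrt (2 * π))⁻¹ with hc
  have hcpos : 0 < c := by positivity
  set glo : ℝ → ℝ := fun w =>
    (Real.log 2 + 2 * Real.log c) * w ^ 2 - (1 - w) ^ 2 / 2 - (l * (1 - w) - w) ^ 2 / 2 with hglo
  set gup : ℝ → ℝ := fun w => Real.log 2 * w ^ 2 - (1 + l ^ 2) / 2 with hgup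
  have hgloc : Continuous glo := by fun_prop
  have hgupc : Continuous gup := by fun_prop
  have hlo : Tendsto (fun z => glo z⁻¹) atBot (𝓝 (-(1 + l ^ 2) / 2)) := by
    have h := (hgloc.tendsto 0).comp tendsto_inv_atBot_zero'
    have h0 : glo 0 = -(1 + l ^ 2) / 2 := by simp [hglo]; ring
    rw [h0] at h; exact h
  have hup : Tendsto (fun z => gup z⁻¹) atBot (𝓝 (-(1 + l ^ 2) / 2)) := by
    have h := (hgupc.tendsto 0).comp tendsto_inv_atBot_zero'
    have h0 : gup 0 = -(1 + l ^ 2) / 2 := by simp [hgup]; ring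
    rw [h0] at h; exact h
  apply tendsto_of_tendsto_of_tendsto_of_le_of_le' hlo hup
  · filter_upwards [eventually_le_atBot (-1 : ℝ)] with z hz
    have hz0 : z ≤ 0 := le_trans hz (by norm_num)
    have hzne : z ≠ 0 := by intro h; rw [h] at hz; norm_num at hz
    have hz2 : (0:ℝ) < z ^ 2 := by positivity
    have hprod : (0:ℝ) < 2 * stdNormalPdf (z - 1) * stdNormalPdf (l * (z - 1) - 1) := by
      have := pdf_pos (z-1); have := pdf_pos (l*(z-1)-1); nlinarith
    have hlog : Real.log (2 * stdNormalPdf (z - 1) * stdNormalPdf (l * (z - 1) - 1))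
        ≤ Real.log (skewNormalCdf l z) := Real.log_le_log hprod (skew_lower hl z hz0)
    have hexpand : Real.log (2 * stdNormalPdf (z - 1) * stdNormalPdf (l * (z - 1) - 1))
        = Real.log 2 + 2 * Real.log c - (z-1)^2/2 - (l*(z-1)-1)^2/2 := by
      rw [Real.log_mul (mul_pos two_pos (pdf_pos _)).ne' (pdf_pos _).ne',
          Real.log_mul (by norm_num) (pdf_pos _).ne', log_pdf, log_pdf]
      ring
    have key : glo z⁻¹
        = (Real.log 2 + 2 * Real.log c - (z-1)^2/2 - (l*(z-1)-1)^2/2) / z ^ 2 := by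
      simp only [hglo]
      field_simp
    rw [key]
    gcongr
    rwa [hexpand] at hlog
  · filter_upwards [eventually_le_atBot (-1 : ℝ)] with z hz
    have hz0 : z ≤ 0 := le_trans hz (by norm_num)
    have hzne : z ≠ 0 := by intro h; rw [h] at hz; norm_num at hz
    have hz2 : (0:ℝ) < z ^ 2 := by positivity
    have hlog : Real.log (skewNormalCdf l z)
        ≤ Real.log (2 * Real.exp (-(1 + l^2) * z^2 / 2)) :=
      Real.log_le_log (skew_pos hl z) (skew_upper hl z hz0)
    have hexpand : Real.log (2 * Real.exp (-(1 + l^2) * z^2 / 2))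
        = Real.log 2 - (1 + l^2) * z^2 / 2 := by
      rw [Real.log_mul (by norm_num) (Real.exp_ne_zero _), Real.log_exp]; ring
    have key : gup z⁻¹ = (Real.log 2 - (1 + l^2) * z^2 / 2) / z ^ 2 := by
      simp only [hgup]
      field_simp
    rw [key]
    gcongr
    rwa [hexpand] at hlog

lemma aux_loglog (c : ℝ) : Tendsto (fun x : ℝ => Real.log (-(x + c)) / x) atBot (𝓝 0) := by
  have hneg : Tendsto (fun x : ℝ => -(x + c)) atBot atTop := by
    apply tendsto_neg_atBot_atTop.comp
    exact tendsto_atBot_add_const_right _ c tendsto_id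
  have T1 : Tendsto (fun x : ℝ => Real.log (-(x + c)) / (-(x + c))) atBot (𝓝 0) :=
    (Real.isLittleO_log_id_atTop.tendsto_div_nhds_zero).comp hneg
  have T2 : Tendsto (fun x : ℝ => (-(x + c)) / x) atBot (𝓝 (-1)) := by
    have h1 : Tendsto (fun x : ℝ => -1 - c * x⁻¹) atBot (𝓝 (-1)) := by
      have := (tendsto_inv_atBot_zero'.const_mul c).neg.const_add (-1)
      simpa using this.congr fun x => by ring
    apply h1.congr'
    filter_upwards [eventually_ne_atBot (0:ℝ)] with x hx
    field_simp
    ring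
  have h3 := T1.mul T2
  rw [zero_mul] at h3
  apply h3.congr'
  filter_upwards [eventually_lt_atBot (-c - 1), eventually_ne_atBot (0:ℝ)] with x hx hx0
  have hne : -(x + c) ≠ 0 := by intro h; nlinarith [h]
  rw [div_mul_div_comm, mul_comm (Real.log (-(x+c)))]
  exact mul_div_mul_left _ _ hne

/-- For l > 0, the quantile function of SN(l) satisfies
F⁻¹(u) ~ -√(-(2/(1+l²)) log(-2πl u log(2πl u))) as u → 0⁺. -/
theorem skewNormal_quantile_asymp_pos (l : ℝ) (hl : 0 < l) (Q : ℝ → ℝ)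
    (hQ : ∀ u ∈ Set.Ioo (0 : ℝ) 1, skewNormalCdf l (Q u) = u) :
    Tendsto (fun u : ℝ =>
      Q u / (-Real.sqrt (-(2 / (1 + l ^ 2)) *
        Real.log (-(2 * π * l * u * Real.log (2 * π * l * u))))))
      (nhdsWithin 0 (Set.Ioi 0)) (nhds 1) := by
  have hπ := Real.pi_pos
  set k : ℝ := 2 * π * l with hk
  have hkpos : 0 < k := by positivity
  set v : ℝ → ℝ := fun u => -(k * u * Real.log (k * u)) with hv
  have hl2 : (0:ℝ) < 1 + l ^ 2 := by positivity
  -- Step 1 : Q tends to -infinity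
  have hQbot : Tendsto Q (𝓝[>] (0:ℝ)) atBot := by
    rw [tendsto_atBot]
    intro M
    have hFM := skew_pos hl M
    have hε : (0:ℝ) < min (skewNormalCdf l M) 2⁻¹ := lt_min hFM (by norm_num)
    have hIoo : Ioo (0:ℝ) (min (skewNormalCdf l M) 2⁻¹) ∈ 𝓝[>] (0:ℝ) :=
      Ioo_mem_nhdsGT_of_mem ⟨le_refl 0, hε⟩
    filter_upwards [hIoo] with u hu
    have hu1 : u ∈ Ioo (0:ℝ) 1 :=
      ⟨hu.1, lt_of_lt_of_le hu.2 (le_trans (min_le_right _ _) (by norm_num))⟩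
    by_contra hcon
    push_neg at hcon
    have h1 : skewNormalCdf l M ≤ skewNormalCdf l (Q u) := skew_mono hcon.le
    rw [hQ u hu1] at h1
    have h2 : u < skewNormalCdf l M := lt_of_lt_of_le hu.2 (min_le_left _ _)
    linarith
  -- eventual membership
  have hmem : ∀ᶠ u in 𝓝[>] (0:ℝ), u ∈ Ioo (0:ℝ) 1 :=
    eventually_of_mem (Ioo_mem_nhdsGT_of_mem ⟨le_refl 0, one_pos⟩) fun u hu => hu
  have hQ1 : ∀ᶠ u in 𝓝[>] (0:ℝ), Q u ≤ -1 := hQbot.eventually (eventually_le_atBot (-1))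
  -- Step 3 : log u / Q u ^ 2 → -(1+l²)/2
  have h3 : Tendsto (fun u => Real.log u / Q u ^ 2) (𝓝[>] (0:ℝ)) (𝓝 (-(1 + l ^ 2) / 2)) := by
    refine ((skew_log_asymp hl).comp hQbot).congr' ?_
    filter_upwards [hmem] with u hu
    simp only [Function.comp_apply]
    rw [hQ u hu]
  -- Step 5 : Q u ^ 2 / (-log u) → 2/(1+l²)
  have h4 : Tendsto (fun u => Q u ^ 2 / (-Real.log u)) (𝓝[>] (0:ℝ)) (𝓝 (2 / (1 + l ^ 2))) := by
    have hne : -(1 + l ^ 2) / 2 ≠ 0 := by intro h; nlinarith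
    have h5 := (h3.inv₀ hne).neg
    have hval : -(-(1 + l ^ 2) / 2)⁻¹ = 2 / (1 + l ^ 2) := by
      rw [neg_div, inv_neg, neg_neg, inv_div]
    rw [hval] at h5
    refine h5.congr' ?_
    filter_upwards [hmem, hQ1] with u hu hq
    rw [inv_div, div_neg]
  -- Step 6 : log tendsto atBot
  have hlogu_bot : Tendsto Real.log (𝓝[>] (0:ℝ)) atBot := Real.tendsto_log_nhdsGT_zero
  -- Step 7 : log (v u) / log u → 1
  have hδ : (0:ℝ) < min 2⁻¹ (Real.exp (-1) / k) := lt_min (by norm_num) (by positivity)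
  have hsmall : ∀ᶠ u in 𝓝[>] (0:ℝ), u ∈ Ioo 0 (min 2⁻¹ (Real.exp (-1) / k)) :=
    eventually_of_mem (Ioo_mem_nhdsGT_of_mem ⟨le_refl 0, hδ⟩) fun u hu => hu
  have hvexp : ∀ᶠ u in 𝓝[>] (0:ℝ),
      Real.log (v u) = Real.log k + Real.log u + Real.log (-(Real.log u + Real.log k)) ∧
      Real.log u < 0 := by
    filter_upwards [hsmall] with u hu
    have hu0 : 0 < u := hu.1
    have hku : k * u ≤ Real.exp (-1) := by
      have h1 : u ≤ Real.exp (-1) / k := le_of_lt (lt_of_lt_of_le hu.2 (min_le_right _ _))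
      rw [mul_comm]
      exact (le_div_iff₀ hkpos).mp h1
    have hlogku : Real.log (k * u) ≤ -1 := by
      calc Real.log (k * u) ≤ Real.log (Real.exp (-1)) :=
            Real.log_le_log (by positivity) hku
        _ = -1 := Real.log_exp _
    have hu1 : u < 1 := lt_of_lt_of_le hu.2 (le_trans (min_le_left _ _) (by norm_num))
    have hlogu : Real.log u < 0 := Real.log_neg hu0 hu1
    refine ⟨?_, hlogu⟩
    have hveq : v u = (k * u) * (-(Real.log (k * u))) := by
      simp only [hv]; ring
    rw [hveq, Real.log_mul (by positivity) (by nlinarith), Real.log_mul hkpos.ne' hu0.ne']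
    congr 2
    ring
  have hL : Tendsto (fun u => Real.log (v u) / Real.log u) (𝓝[>] (0:ℝ)) (𝓝 1) := by
    have hc : Tendsto (fun u : ℝ => Real.log k * (Real.log u)⁻¹) (𝓝[>] (0:ℝ)) (𝓝 0) := by
      have := (tendsto_inv_atBot_zero'.comp hlogu_bot).const_mul (Real.log k)
      rwa [mul_zero] at this
    have hll : Tendsto (fun u : ℝ => Real.log (-(Real.log u + Real.log k)) / Real.log u)
        (𝓝[>] (0:ℝ)) (𝓝 0) := (aux_loglog (Real.log k)).comp hlogu_bot
    have hsum := ((tendsto_const_nhds (x := (1:ℝ)) (f := 𝓝[>] (0:ℝ))).add hc).add hll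
    rw [add_zero, add_zero] at hsum
    refine hsum.congr' ?_
    filter_upwards [hvexp] with u hu
    rcases hu with ⟨heq, hlogu⟩
    have h0 : Real.log u ≠ 0 := ne_of_lt hlogu
    rw [heq]
    field_simp
    ring
  -- Step 8 : log (v u) → -infinity
  have hLbot : Tendsto (fun u => Real.log (v u)) (𝓝[>] (0:ℝ)) atBot := by
    have hmul := hL.pos_mul_atBot one_pos hlogu_bot
    refine hmul.congr' ?_
    filter_upwards [hvexp] with u hu
    rw [div_mul_cancel₀ _ (ne_of_lt hu.2)]
  have hLneg : ∀ᶠ u in 𝓝[>] (0:ℝ), Real.log (v u) < 0 :=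
    hLbot.eventually (eventually_lt_atBot 0)
  -- Step 9 : inside ratio → 1
  have h5 : Tendsto (fun u => Real.log u / Real.log (v u)) (𝓝[>] (0:ℝ)) (𝓝 1) := by
    have := hL.inv₀ one_ne_zero
    rw [inv_one] at this
    refine this.congr fun u => ?_
    rw [inv_div]
  have hinside : Tendsto
      (fun u => Q u ^ 2 / (-(2 / (1 + l ^ 2)) * Real.log (v u))) (𝓝[>] (0:ℝ)) (𝓝 1) := by
    have hmul := h4.mul ((tendsto_const_nhds (x := (1 + l ^ 2) / 2) (f := 𝓝[>] (0:ℝ))).mul h5)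
    have hval : 2 / (1 + l ^ 2) * ((1 + l ^ 2) / 2 * 1) = 1 := by
      field_simp
    rw [hval] at hmul
    refine hmul.congr' ?_
    filter_upwards [hvexp, hLneg] with u hu hL0
    have hlogu := hu.2
    have h0 : Real.log u ≠ 0 := ne_of_lt hlogu
    have h1 : Real.log (v u) ≠ 0 := ne_of_lt hL0
    field_simp
  -- Step 10 : final
  have hsqrt : Tendsto (fun u => Real.sqrt
      (Q u ^ 2 / (-(2 / (1 + l ^ 2)) * Real.log (v u)))) (𝓝[>] (0:ℝ)) (𝓝 1) := by
    have := (Real.continuous_sqrt.tendsto 1).comp hinside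
    rwa [Real.sqrt_one] at this
  refine hsqrt.congr' ?_
  filter_upwards [hQ1, hLneg] with u hq hL0
  have hI : 0 < -(2 / (1 + l ^ 2)) * Real.log (v u) := by
    have h2l : (0:ℝ) < 2 / (1 + l ^ 2) := by positivity
    nlinarith
  have hQneg : Q u ≤ 0 := le_trans hq (by norm_num)
  rw [Real.sqrt_div (sq_nonneg _), Real.sqrt_sq_eq_abs, abs_of_nonpos hQneg]
  rw [div_neg, neg_div]
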